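/- Let B ⊆ P be a coalgebra-Galois C-extension. Then there exists a unique entwining structure (P, C, ψ) such that P is an entwined module in M_P^C(ψ) with the right P-module structure given by multiplication and the given coaction Δ_P; the entwining map is given by ψ(c ⊗ p) = can(τ(c) · p), where τ is the translation map. -/

import Mathlib

/-!
STATEMENT 11. For a coalgebra-Galois C-extension B ⊆ P, there is a unique
entwining structure (P, C, ψ) making P an entwined module in M_P^C(ψ) (with
P-action the multiplication); ψ is given by ψ(c ⊗ p) = can(τ(c) · p).
-/

open TensorProduct LinearMap

noncomputable section

namespace CGal

variable {k : Type*} [Field k]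
variable {P C : Type*} [Ring P] [Algebra k P]
  [AddCommGroup C] [Module k C] [Coalgebra k C]

/-- The coaction invariants `P^{coC}`. -/
def coinv (δ : P →ₗ[k] P ⊗[k] C) : Set P :=
  {b : P | ∀ p : P, δ (b * p) = b • δ p}

/-- `δ` is a (counital, coassociative) right `C`-coaction on `P`. -/
def IsCoaction (δ : P →ₗ[k] P ⊗[k] C) : Prop :=
  (∀ p : P, (TensorProduct.rid k P) ((lTensor P (Coalgebra.counit : C →ₗ[k] k)) (δ p)) = p) ∧
  (∀ p : P, (rTensor C δ) (δ p)
      = (TensorProduct.assoc k P C C).symm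
          ((lTensor P (Coalgebra.comul : C →ₗ[k] C ⊗[k] C)) (δ p)))

/-- The kernel of `P ⊗ P → P ⊗_B P` for `B = P^{coC}`. -/
def galRel (δ : P →ₗ[k] P ⊗[k] C) : Submodule k (P ⊗[k] P) :=
  Submodule.span k
    {x | ∃ p b p', b ∈ coinv δ ∧ x = (p * b) ⊗ₜ[k] p' - p ⊗ₜ[k] (b * p')}

/-- The lifted canonical map `~can : P ⊗ P → P ⊗ C`. -/
def canLift (δ : P →ₗ[k] P ⊗[k] C) : P ⊗[k] P →ₗ[k] P ⊗[k] C :=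
  (TensorProduct.map (LinearMap.mul' k P) LinearMap.id)
    ∘ₗ (TensorProduct.assoc k P P C).symm.toLinearMap
    ∘ₗ (lTensor P δ)

/-- The extension `P^{coC} ⊆ P` is coalgebra-Galois. -/
def IsCGalois (δ : P →ₗ[k] P ⊗[k] C) : Prop :=
  Function.Surjective (canLift δ) ∧ LinearMap.ker (canLift δ) = galRel δ

/-- The bow-tie axioms of an entwining structure `(P, C, ψ)`. -/
def IsEntwining (ψ : C ⊗[k] P →ₗ[k] P ⊗[k] C) : Prop :=
  (ψ ∘ₗ (lTensor C (LinearMap.mul' k P))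
     = (rTensor C (LinearMap.mul' k P))
        ∘ₗ (TensorProduct.assoc k P P C).symm.toLinearMap
        ∘ₗ (lTensor P ψ)
        ∘ₗ (TensorProduct.assoc k P C P).toLinearMap
        ∘ₗ (rTensor P ψ)
        ∘ₗ (TensorProduct.assoc k C P P).symm.toLinearMap) ∧
  (∀ c : C, ψ (c ⊗ₜ[k] (1 : P)) = (1 : P) ⊗ₜ[k] c) ∧
  ((lTensor P (Coalgebra.comul : C →ₗ[k] C ⊗[k] C)) ∘ₗ ψ
     = (TensorProduct.assoc k P C C).toLinearMap
        ∘ₗ (rTensor C ψ)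
        ∘ₗ (TensorProduct.assoc k C P C).symm.toLinearMap
        ∘ₗ (lTensor C ψ)
        ∘ₗ (TensorProduct.assoc k C C P).toLinearMap
        ∘ₗ (rTensor P (Coalgebra.comul : C →ₗ[k] C ⊗[k] C))) ∧
  ((TensorProduct.rid k P).toLinearMap
      ∘ₗ (lTensor P (Coalgebra.counit : C →ₗ[k] k)) ∘ₗ ψ
     = (TensorProduct.lid k P).toLinearMap
      ∘ₗ (rTensor P (Coalgebra.counit : C →ₗ[k] k)))

/-- `P` (with action the multiplication and coaction `δ`) is an entwined
module for `(P, C, ψ)`: `δ(mp) = m₍₀₎ ψ(m₍₁₎ ⊗ p)`. -/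
def IsEntwinedOn (δ : P →ₗ[k] P ⊗[k] C) (ψ : C ⊗[k] P →ₗ[k] P ⊗[k] C) : Prop :=
  ∀ m p : P,
    δ (m * p)
      = ((rTensor C (LinearMap.mul' k P))
          ∘ₗ (TensorProduct.assoc k P P C).symm.toLinearMap
          ∘ₗ (lTensor P ψ)
          ∘ₗ (TensorProduct.assoc k P C P).toLinearMap)
        ((δ m) ⊗ₜ[k] p)
set_option linter.unusedSectionVars false
/-! ### Auxiliary development -/

section Aux

variable {k : Type*} [Field k]
variable {P C : Type*} [Ring P] [Algebra k P]
  [AddCommGroup C] [Module k C] [Coalgebra k C]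

/-- First-leg left multiplication on `P ⊗ C`. -/
noncomputable def act (x : P) : P ⊗[k] C →ₗ[k] P ⊗[k] C :=
  rTensor C (LinearMap.mulLeft k x)

lemma act_tmul (x z : P) (c : C) : act x (z ⊗ₜ[k] c) = (x * z) ⊗ₜ[k] c := rfl

lemma act_act (x y : P) (u : P ⊗[k] C) : act x (act y u) = act (x * y) u := by
  induction u using TensorProduct.induction_on with
  | zero => simp
  | tmul z c => simp [act_tmul, mul_assoc]
  | add u v hu hv => simp [map_add, hu, hv]

lemma act_one (u : P ⊗[k] C) : act (1 : P) u = u := by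
  induction u using TensorProduct.induction_on with
  | zero => simp
  | tmul z c => simp [act_tmul]
  | add u v hu hv => simp [map_add, hu, hv]

lemma map_mul_assoc_symm (a : P) (v : P ⊗[k] C) :
    (TensorProduct.map (LinearMap.mul' k P) LinearMap.id)
      ((TensorProduct.assoc k P P C).symm (a ⊗ₜ[k] v)) = act a v := by
  induction v using TensorProduct.induction_on with
  | zero => simp
  | tmul z c => simp [TensorProduct.assoc_symm_tmul, act_tmul]
  | add u v hu hv => simp [tmul_add, map_add, hu, hv]

lemma rTensor_mul_assoc_symm (a : P) (v : P ⊗[k] C) :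
    (rTensor C (LinearMap.mul' k P))
      ((TensorProduct.assoc k P P C).symm (a ⊗ₜ[k] v)) = act a v :=
  map_mul_assoc_symm a v

variable (δ : P →ₗ[k] P ⊗[k] C)

lemma canLift_tmul (a b : P) : canLift δ (a ⊗ₜ[k] b) = act a (δ b) := by
  simp only [canLift, LinearMap.comp_apply, lTensor_tmul, LinearEquiv.coe_coe]
  exact map_mul_assoc_symm a (δ b)

lemma canLift_one_tmul (b : P) : canLift δ ((1 : P) ⊗ₜ[k] b) = δ b := by
  rw [canLift_tmul, act_one]

lemma galRel_mulRight {t : P ⊗[k] P} (ht : t ∈ galRel δ) (p : P) :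
    lTensor P (LinearMap.mulRight k p) t ∈ galRel δ := by
  induction ht using Submodule.span_induction with
  | mem x hx =>
      obtain ⟨q, b, p', hb, rfl⟩ := hx
      apply Submodule.subset_span
      refine ⟨q, b, p' * p, hb, ?_⟩
      simp [map_sub, lTensor_tmul, LinearMap.mulRight_apply, mul_assoc]
  | zero => simp
  | add x y _ _ hx hy => rw [map_add]; exact Submodule.add_mem _ hx hy
  | smul c x _ hx => rw [map_smul]; exact Submodule.smul_mem _ _ hx

end Aux
section Aux2
set_option linter.unusedSectionVars false

variable {k : Type*} [Field k]
variable {P C : Type*} [Ring P] [Algebra k P]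
  [AddCommGroup C] [Module k C] [Coalgebra k C]
variable (δ : P →ₗ[k] P ⊗[k] C)

/-- The canonical iso `P ⊗_B P ≅ P ⊗ C` coming from a Galois extension. -/
noncomputable def eQ (hGal : IsCGalois δ) :
    ((P ⊗[k] P) ⧸ galRel δ) ≃ₗ[k] P ⊗[k] C :=
  LinearEquiv.ofBijective ((galRel δ).liftQ (canLift δ) (le_of_eq hGal.2.symm))
    ⟨by
      rw [← LinearMap.ker_eq_bot]
      exact Submodule.ker_liftQ_eq_bot _ _ _ (le_of_eq hGal.2),
     by
      intro u
      obtain ⟨t, ht⟩ := hGal.1 u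
      exact ⟨(galRel δ).mkQ t, by simpa using ht⟩⟩

lemma eQ_mk (hGal : IsCGalois δ) (t : P ⊗[k] P) :
    eQ δ hGal ((galRel δ).mkQ t) = canLift δ t := by
  exact Submodule.liftQ_apply (h := le_of_eq hGal.2.symm) _ _ _

lemma eQ_symm_canLift (hGal : IsCGalois δ) (t : P ⊗[k] P) :
    (eQ δ hGal).symm (canLift δ t) = (galRel δ).mkQ t := by
  rw [← eQ_mk δ hGal, LinearEquiv.symm_apply_apply]

lemma lTensor_mulRight_add (t : P ⊗[k] P) (p p' : P) :
    lTensor P (LinearMap.mulRight k (p + p')) t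
      = lTensor P (LinearMap.mulRight k p) t + lTensor P (LinearMap.mulRight k p') t := by
  induction t using TensorProduct.induction_on with
  | zero => simp
  | tmul a b => simp [lTensor_tmul, mul_add, tmul_add]
  | add u v hu hv => simp only [map_add, hu, hv]; abel

lemma lTensor_mulRight_smul (t : P ⊗[k] P) (s : k) (p : P) :
    lTensor P (LinearMap.mulRight k (s • p)) t
      = s • lTensor P (LinearMap.mulRight k p) t := by
  induction t using TensorProduct.induction_on with
  | zero => simp
  | tmul a b => simp [lTensor_tmul, mul_smul_comm, tmul_smul]
  | add u v hu hv => simp only [map_add, hu, hv, smul_add]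

/-- The bilinear map `(t, p) ↦ canLift (t · (1 ⊗ p))`. -/
noncomputable def Bmap : (P ⊗[k] P) →ₗ[k] P →ₗ[k] P ⊗[k] C :=
  LinearMap.mk₂ k (fun t p => canLift δ (lTensor P (LinearMap.mulRight k p) t))
    (fun t t' p => by simp [map_add])
    (fun s t p => by simp [map_smul])
    (fun t p p' => by simp only [lTensor_mulRight_add, map_add])
    (fun s t p => by simp only [lTensor_mulRight_smul, map_smul])

lemma Bmap_zero_of_mem (hGal : IsCGalois δ) {t : P ⊗[k] P} (ht : t ∈ galRel δ) :
    Bmap δ t = 0 := by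
  ext p
  have : lTensor P (LinearMap.mulRight k p) t ∈ LinearMap.ker (canLift δ) := by
    rw [hGal.2]; exact galRel_mulRight δ ht p
  simpa [Bmap] using this

/-- Right multiplication descended: `Mbar (π t ⊗ p) = canLift (t · (1 ⊗ p))`. -/
noncomputable def Mbar (hGal : IsCGalois δ) :
    ((P ⊗[k] P) ⧸ galRel δ) ⊗[k] P →ₗ[k] P ⊗[k] C :=
  TensorProduct.lift ((galRel δ).liftQ (M₂ := P →ₗ[k] P ⊗[k] C) (Bmap δ)
    (fun t ht => by simpa [LinearMap.mem_ker] using Bmap_zero_of_mem δ hGal ht))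

lemma Mbar_mk (hGal : IsCGalois δ) (t : P ⊗[k] P) (p : P) :
    Mbar δ hGal ((galRel δ).mkQ t ⊗ₜ[k] p)
      = canLift δ (lTensor P (LinearMap.mulRight k p) t) := by
  simp [Mbar, Bmap]

lemma Mbar_mk_tmul (hGal : IsCGalois δ) (a b p : P) :
    Mbar δ hGal ((galRel δ).mkQ (a ⊗ₜ[k] b) ⊗ₜ[k] p) = canLift δ (a ⊗ₜ[k] (b * p)) := by
  rw [Mbar_mk]; simp [lTensor_tmul]

/-- `j c = can⁻¹(1 ⊗ c)`, the translation map. -/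
noncomputable def jmap (hGal : IsCGalois δ) : C →ₗ[k] ((P ⊗[k] P) ⧸ galRel δ) :=
  (eQ δ hGal).symm.toLinearMap ∘ₗ (TensorProduct.mk k P C) 1

/-- The entwining map `ψ(c ⊗ p) = can(τ(c)(1 ⊗ p))`. -/
noncomputable def psi (hGal : IsCGalois δ) : C ⊗[k] P →ₗ[k] P ⊗[k] C :=
  Mbar δ hGal ∘ₗ rTensor P (jmap δ hGal)

lemma psi_tmul (hGal : IsCGalois δ) (c : C) (p : P) :
    psi δ hGal (c ⊗ₜ[k] p) = Mbar δ hGal (jmap δ hGal c ⊗ₜ[k] p) := by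
  simp [psi]

lemma jmap_rep (hGal : IsCGalois δ) (c : C) :
    ∃ t, canLift δ t = (1 : P) ⊗ₜ[k] c ∧ (galRel δ).mkQ t = jmap δ hGal c := by
  obtain ⟨t, ht⟩ := hGal.1 ((1 : P) ⊗ₜ[k] c)
  exact ⟨t, ht, by rw [← eQ_symm_canLift δ hGal, ht]; simp [jmap]⟩

lemma mkQ_eq_jmap (hGal : IsCGalois δ) {t : P ⊗[k] P} {c : C}
    (ht : canLift δ t = (1 : P) ⊗ₜ[k] c) : (galRel δ).mkQ t = jmap δ hGal c := by
  rw [← eQ_symm_canLift δ hGal, ht]; simp [jmap]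

lemma psi_rep (hGal : IsCGalois δ) {t : P ⊗[k] P} {c : C} (p : P)
    (ht : canLift δ t = (1 : P) ⊗ₜ[k] c) :
    psi δ hGal (c ⊗ₜ[k] p) = canLift δ (lTensor P (LinearMap.mulRight k p) t) := by
  rw [psi_tmul, ← mkQ_eq_jmap δ hGal ht, Mbar_mk]

end Aux2
section Aux3
set_option linter.unusedSectionVars false

variable {k : Type*} [Field k]
variable {P C : Type*} [Ring P] [Algebra k P]
  [AddCommGroup C] [Module k C] [Coalgebra k C]
variable (δ : P →ₗ[k] P ⊗[k] C)

lemma act_Mbar (hGal : IsCGalois δ) (t : P ⊗[k] P) (x p : P) :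
    act x (Mbar δ hGal ((galRel δ).mkQ t ⊗ₜ[k] p))
      = Mbar δ hGal ((eQ δ hGal).symm (act x (canLift δ t)) ⊗ₜ[k] p) := by
  induction t using TensorProduct.induction_on with
  | zero => simp
  | tmul a b =>
      rw [Mbar_mk_tmul, canLift_tmul, canLift_tmul, act_act, act_act,
        ← canLift_tmul δ (x * a) b, eQ_symm_canLift, Mbar_mk_tmul, canLift_tmul]
  | add u v hu hv =>
      simp only [map_add, TensorProduct.add_tmul] at *
      rw [hu, hv]

lemma delta_mul (hGal : IsCGalois δ) (b p : P) :
    δ (b * p) = Mbar δ hGal ((eQ δ hGal).symm (δ b) ⊗ₜ[k] p) := by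
  rw [← canLift_one_tmul δ b, eQ_symm_canLift, Mbar_mk_tmul, canLift_one_tmul]

/-- The composite appearing in `IsEntwinedOn` (and bow-tie axiom 1), for any `ψ₀`. -/
lemma entwComp_tmul (ψ₀ : C ⊗[k] P →ₗ[k] P ⊗[k] C) (x : P) (c : C) (p : P) :
    ((rTensor C (LinearMap.mul' k P))
        ∘ₗ (TensorProduct.assoc k P P C).symm.toLinearMap
        ∘ₗ (lTensor P ψ₀)
        ∘ₗ (TensorProduct.assoc k P C P).toLinearMap)
      ((x ⊗ₜ[k] c) ⊗ₜ[k] p) = act x (ψ₀ (c ⊗ₜ[k] p)) := by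
  simp only [LinearMap.comp_apply, LinearEquiv.coe_coe, TensorProduct.assoc_tmul,
    lTensor_tmul]
  exact rTensor_mul_assoc_symm x _

lemma entwComp_psi (hGal : IsCGalois δ) (u : P ⊗[k] C) (p : P) :
    ((rTensor C (LinearMap.mul' k P))
        ∘ₗ (TensorProduct.assoc k P P C).symm.toLinearMap
        ∘ₗ (lTensor P (psi δ hGal))
        ∘ₗ (TensorProduct.assoc k P C P).toLinearMap)
      (u ⊗ₜ[k] p) = Mbar δ hGal ((eQ δ hGal).symm u ⊗ₜ[k] p) := by
  induction u using TensorProduct.induction_on with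
  | zero => simp
  | tmul x c =>
      rw [entwComp_tmul, psi_tmul]
      obtain ⟨t, ht, hmk⟩ := jmap_rep δ hGal c
      rw [← hmk, act_Mbar, ht]
      have : act x ((1 : P) ⊗ₜ[k] c) = x ⊗ₜ[k] c := by rw [act_tmul, mul_one]
      rw [this]
  | add u v hu hv =>
      simp only [TensorProduct.add_tmul, map_add] at *
      rw [hu, hv]

lemma psi_entwinedOn (hGal : IsCGalois δ) : IsEntwinedOn δ (psi δ hGal) := by
  intro m p
  rw [entwComp_psi δ hGal (δ m) p, ← delta_mul]

/-- Unit axiom. -/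
lemma psi_unit (hGal : IsCGalois δ) (c : C) :
    psi δ hGal (c ⊗ₜ[k] (1 : P)) = (1 : P) ⊗ₜ[k] c := by
  obtain ⟨t, ht, _⟩ := jmap_rep δ hGal c
  rw [psi_rep δ hGal 1 ht, LinearMap.mulRight_one, lTensor_id, LinearMap.id_apply, ht]

lemma Mbar_assoc (hGal : IsCGalois δ) (q : (P ⊗[k] P) ⧸ galRel δ) (p p' : P) :
    Mbar δ hGal ((eQ δ hGal).symm (Mbar δ hGal (q ⊗ₜ[k] p)) ⊗ₜ[k] p')
      = Mbar δ hGal (q ⊗ₜ[k] (p * p')) := by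
  obtain ⟨t, rfl⟩ := Submodule.mkQ_surjective _ q
  induction t using TensorProduct.induction_on with
  | zero => simp
  | tmul a b =>
      rw [Mbar_mk_tmul, eQ_symm_canLift, Mbar_mk_tmul, Mbar_mk_tmul, mul_assoc]
  | add u v hu hv =>
      simp only [map_add, TensorProduct.add_tmul] at *
      rw [hu, hv]

/-- Multiplicativity axiom. -/
lemma psi_mult (hGal : IsCGalois δ) :
    (psi δ hGal) ∘ₗ (lTensor C (LinearMap.mul' k P))
     = (rTensor C (LinearMap.mul' k P))
        ∘ₗ (TensorProduct.assoc k P P C).symm.toLinearMap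
        ∘ₗ (lTensor P (psi δ hGal))
        ∘ₗ (TensorProduct.assoc k P C P).toLinearMap
        ∘ₗ (rTensor P (psi δ hGal))
        ∘ₗ (TensorProduct.assoc k C P P).symm.toLinearMap := by
  apply TensorProduct.ext'
  intro c u
  induction u using TensorProduct.induction_on with
  | zero => simp
  | tmul p p' =>
      have hL : ((psi δ hGal) ∘ₗ (lTensor C (LinearMap.mul' k P))) (c ⊗ₜ[k] (p ⊗ₜ[k] p'))
          = psi δ hGal (c ⊗ₜ[k] (p * p')) := by
        simp [lTensor_tmul]
      rw [hL]
      have hR : ((TensorProduct.assoc k C P P).symm.toLinearMap) (c ⊗ₜ[k] (p ⊗ₜ[k] p'))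
          = (c ⊗ₜ[k] p) ⊗ₜ[k] p' := TensorProduct.assoc_symm_tmul ..
      simp only [LinearMap.comp_apply, LinearEquiv.coe_coe] at hR ⊢
      rw [hR, rTensor_tmul]
      have := entwComp_psi δ hGal (psi δ hGal (c ⊗ₜ[k] p)) p'
      simp only [LinearMap.comp_apply, LinearEquiv.coe_coe] at this
      rw [this, psi_tmul δ hGal c p, Mbar_assoc, psi_tmul δ hGal c (p * p')]
  | add u v hu hv =>
      simp only [tmul_add, map_add] at *
      rw [hu, hv]

end Aux3
section Aux4
set_option linter.unusedSectionVars false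

variable {k : Type*} [Field k]
variable {P C : Type*} [Ring P] [Algebra k P]
  [AddCommGroup C] [Module k C] [Coalgebra k C]
variable (δ : P →ₗ[k] P ⊗[k] C)

/-- `E = (id ⊗ ε)` followed by `rid`. -/
noncomputable def Emap : P ⊗[k] C →ₗ[k] P :=
  (TensorProduct.rid k P).toLinearMap ∘ₗ lTensor P (Coalgebra.counit : C →ₗ[k] k)

lemma Emap_tmul (z : P) (c : C) :
    Emap (z ⊗ₜ[k] c) = (Coalgebra.counit (R := k) c) • z := by
  simp [Emap]

lemma Emap_act (x : P) (u : P ⊗[k] C) : Emap (act x u) = x * Emap u := by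
  induction u using TensorProduct.induction_on with
  | zero => simp
  | tmul z c => rw [act_tmul, Emap_tmul, Emap_tmul, mul_smul_comm]
  | add u v hu hv => simp only [map_add, mul_add, hu, hv]

lemma Emap_delta (hδ : IsCoaction δ) (b : P) : Emap (δ b) = b := hδ.1 b

lemma Emap_canLift (hδ : IsCoaction δ) (s : P ⊗[k] P) :
    Emap (canLift δ s) = LinearMap.mul' k P s := by
  induction s using TensorProduct.induction_on with
  | zero => simp
  | tmul a b => rw [canLift_tmul, Emap_act, Emap_delta δ hδ, LinearMap.mul'_apply]
  | add u v hu hv => simp only [map_add, hu, hv]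

lemma mul'_lTensor_mulRight (s : P ⊗[k] P) (p : P) :
    LinearMap.mul' k P (lTensor P (LinearMap.mulRight k p) s)
      = LinearMap.mul' k P s * p := by
  induction s using TensorProduct.induction_on with
  | zero => simp
  | tmul a b => simp [lTensor_tmul, mul_assoc]
  | add u v hu hv => simp only [map_add, hu, hv, add_mul]

/-- Counit axiom. -/
lemma psi_counit (hδ : IsCoaction δ) (hGal : IsCGalois δ) :
    (TensorProduct.rid k P).toLinearMap
      ∘ₗ (lTensor P (Coalgebra.counit : C →ₗ[k] k)) ∘ₗ (psi δ hGal)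
     = (TensorProduct.lid k P).toLinearMap
      ∘ₗ (rTensor P (Coalgebra.counit : C →ₗ[k] k)) := by
  apply TensorProduct.ext'
  intro c p
  obtain ⟨t, ht, _⟩ := jmap_rep δ hGal c
  have hL : ((TensorProduct.rid k P).toLinearMap
      ∘ₗ (lTensor P (Coalgebra.counit : C →ₗ[k] k)) ∘ₗ (psi δ hGal)) (c ⊗ₜ[k] p)
      = Emap (psi δ hGal (c ⊗ₜ[k] p)) := rfl
  rw [hL, psi_rep δ hGal p ht, Emap_canLift δ hδ, mul'_lTensor_mulRight,
    ← Emap_canLift δ hδ t, ht, Emap_tmul, smul_mul_assoc, one_mul]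
  simp [rTensor_tmul]

/-! ### Pentagon (coassociativity) axiom -/

lemma assoc_symm_mul_left (a x : P) (w : C ⊗[k] C) :
    (TensorProduct.assoc k P C C).symm ((a * x) ⊗ₜ[k] w)
      = rTensor C (act (k := k) a) ((TensorProduct.assoc k P C C).symm (x ⊗ₜ[k] w)) := by
  induction w using TensorProduct.induction_on with
  | zero => simp
  | tmul c₁ c₂ => simp [TensorProduct.assoc_symm_tmul, act_tmul]
  | add u v hu hv => simp only [tmul_add, map_add, hu, hv]

lemma theta_act (a : P) (v : P ⊗[k] C) :
    (TensorProduct.assoc k P C C).symm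
        ((lTensor P (Coalgebra.comul : C →ₗ[k] C ⊗[k] C)) (act a v))
      = rTensor C (act (k := k) a)
        ((TensorProduct.assoc k P C C).symm
          ((lTensor P (Coalgebra.comul : C →ₗ[k] C ⊗[k] C)) v)) := by
  induction v using TensorProduct.induction_on with
  | zero => simp
  | tmul x c => rw [act_tmul, lTensor_tmul, lTensor_tmul, assoc_symm_mul_left]
  | add u v hu hv => simp only [map_add, hu, hv]

lemma rTensor_canLift_assoc (a : P) (v : P ⊗[k] C) :
    rTensor C (canLift δ) ((TensorProduct.assoc k P P C).symm (a ⊗ₜ[k] v))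
      = rTensor C (act (k := k) a) (rTensor C δ v) := by
  induction v using TensorProduct.induction_on with
  | zero => simp
  | tmul x c => simp [TensorProduct.assoc_symm_tmul, rTensor_tmul, canLift_tmul]
  | add u v hu hv => simp only [tmul_add, map_add, hu, hv]

/-- `(id ⊗ Δ) ∘ can = (can ⊗ id) ∘ (id ⊗ δ)` (flattened). -/
lemma theta_canLift (hδ : IsCoaction δ) (s : P ⊗[k] P) :
    (TensorProduct.assoc k P C C).symm
        ((lTensor P (Coalgebra.comul : C →ₗ[k] C ⊗[k] C)) (canLift δ s))
      = rTensor C (canLift δ)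
        ((TensorProduct.assoc k P P C).symm ((lTensor P δ) s)) := by
  induction s using TensorProduct.induction_on with
  | zero => simp
  | tmul a b =>
      rw [canLift_tmul, theta_act, lTensor_tmul, rTensor_canLift_assoc, ← hδ.2 b]
  | add u v hu hv => simp only [map_add, hu, hv]

/-- Translation map identity: `(id ⊗_B δ) τ(c) = (τ ⊗ id) Δ(c)`. -/
lemma trans_comul (hδ : IsCoaction δ) (hGal : IsCGalois δ) {t : P ⊗[k] P} {c : C}
    (ht : canLift δ t = (1 : P) ⊗ₜ[k] c) :
    rTensor C ((galRel δ).mkQ) ((TensorProduct.assoc k P P C).symm ((lTensor P δ) t))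
      = rTensor C (jmap δ hGal) ((Coalgebra.comul : C →ₗ[k] C ⊗[k] C) c) := by
  apply (TensorProduct.congr (eQ δ hGal) (LinearEquiv.refl k C)).injective
  have h1 : ∀ w : (P ⊗[k] P) ⊗[k] C,
      (TensorProduct.congr (eQ δ hGal) (LinearEquiv.refl k C))
        (rTensor C ((galRel δ).mkQ) w) = rTensor C (canLift δ) w := by
    intro w
    induction w using TensorProduct.induction_on with
    | zero => simp
    | tmul s c =>
        have : (eQ δ hGal) (Submodule.Quotient.mk s) = canLift δ s := eQ_mk δ hGal s
        simp [TensorProduct.congr_tmul, rTensor_tmul, this]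
    | add u v hu hv => simp only [map_add, hu, hv]
  have h2 : ∀ w : C ⊗[k] C,
      (TensorProduct.congr (eQ δ hGal) (LinearEquiv.refl k C))
        (rTensor C (jmap δ hGal) w)
        = (TensorProduct.assoc k P C C).symm ((1 : P) ⊗ₜ[k] w) := by
    intro w
    induction w using TensorProduct.induction_on with
    | zero => simp
    | tmul c₁ c₂ =>
        have : (eQ δ hGal) (jmap δ hGal c₁) = (1 : P) ⊗ₜ[k] c₁ := by
          simp [jmap]
        simp [TensorProduct.congr_tmul, rTensor_tmul, this,
          TensorProduct.assoc_symm_tmul]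
    | add u v hu hv => simp only [tmul_add, map_add, hu, hv]
  rw [h1, h2, ← theta_canLift δ hδ t, ht, lTensor_tmul]

end Aux4
section Aux5
set_option linter.unusedSectionVars false

variable {k : Type*} [Field k]
variable {P C : Type*} [Ring P] [Algebra k P]
  [AddCommGroup C] [Module k C] [Coalgebra k C]
variable (δ : P →ₗ[k] P ⊗[k] C)

/-- `ψ(-, p) : C → P ⊗ C`. -/
noncomputable def psiP (hGal : IsCGalois δ) (p : P) : C →ₗ[k] P ⊗[k] C :=
  psi δ hGal ∘ₗ ((TensorProduct.mk k C P).flip p)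

lemma psiP_apply (hGal : IsCGalois δ) (p : P) (c : C) :
    psiP δ hGal p c = psi δ hGal (c ⊗ₜ[k] p) := rfl

/-- The auxiliary map `X(q ⊗ c) = (Mbar ⊗ id)(q ⊗ ψ(c ⊗ p))`. -/
noncomputable def Xmap (hGal : IsCGalois δ) (p : P) :
    (((P ⊗[k] P) ⧸ galRel δ) ⊗[k] C) →ₗ[k] (P ⊗[k] C) ⊗[k] C :=
  rTensor C (Mbar δ hGal)
    ∘ₗ (TensorProduct.assoc k ((P ⊗[k] P) ⧸ galRel δ) P C).symm.toLinearMap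
    ∘ₗ lTensor _ (psiP δ hGal p)

lemma Xmap_tmul (hGal : IsCGalois δ) (p : P) (q : (P ⊗[k] P) ⧸ galRel δ) (c : C) :
    Xmap δ hGal p (q ⊗ₜ[k] c)
      = rTensor C (Mbar δ hGal)
          ((TensorProduct.assoc k ((P ⊗[k] P) ⧸ galRel δ) P C).symm
            (q ⊗ₜ[k] psi δ hGal (c ⊗ₜ[k] p))) := by
  simp [Xmap, lTensor_tmul, psiP_apply]

lemma C2_lemma (hGal : IsCGalois δ) (a y : P) (w : P ⊗[k] C) :
    rTensor C (canLift δ)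
        ((TensorProduct.assoc k P P C).symm (a ⊗ₜ[k] act y w))
      = rTensor C (Mbar δ hGal)
          ((TensorProduct.assoc k ((P ⊗[k] P) ⧸ galRel δ) P C).symm
            ((galRel δ).mkQ (a ⊗ₜ[k] y) ⊗ₜ[k] w)) := by
  induction w using TensorProduct.induction_on with
  | zero => simp
  | tmul z e =>
      rw [act_tmul]
      simp only [TensorProduct.assoc_symm_tmul, rTensor_tmul]
      rw [Mbar_mk_tmul, canLift_tmul]
  | add u v hu hv => simp only [map_add, tmul_add, hu, hv]

lemma Mbar_act_psi (hGal : IsCGalois δ) (y : P) (c : C) (p : P) :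
    Mbar δ hGal ((eQ δ hGal).symm (y ⊗ₜ[k] c) ⊗ₜ[k] p)
      = act y (psi δ hGal (c ⊗ₜ[k] p)) :=
  (entwComp_psi δ hGal (y ⊗ₜ[k] c) p).symm.trans (entwComp_tmul (psi δ hGal) y c p)

lemma C1_lemma (hGal : IsCGalois δ) (a : P) (p : P) (v : P ⊗[k] C) :
    rTensor C (canLift δ)
        ((TensorProduct.assoc k P P C).symm
          (a ⊗ₜ[k] (Mbar δ hGal ((eQ δ hGal).symm v ⊗ₜ[k] p))))
      = Xmap δ hGal p
          (rTensor C ((galRel δ).mkQ)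
            ((TensorProduct.assoc k P P C).symm (a ⊗ₜ[k] v))) := by
  induction v using TensorProduct.induction_on with
  | zero => simp
  | tmul y c =>
      rw [Mbar_act_psi, C2_lemma]
      simp only [TensorProduct.assoc_symm_tmul, rTensor_tmul]
      rw [Xmap_tmul]
  | add u v hu hv =>
      simp only [map_add, tmul_add, TensorProduct.add_tmul, hu, hv]

/-- Step (★). -/
lemma star_lemma (hGal : IsCGalois δ) (p : P) (s : P ⊗[k] P) :
    rTensor C (canLift δ)
        ((TensorProduct.assoc k P P C).symm
          ((lTensor P δ) ((lTensor P (LinearMap.mulRight k p)) s)))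
      = Xmap δ hGal p
          (rTensor C ((galRel δ).mkQ)
            ((TensorProduct.assoc k P P C).symm ((lTensor P δ) s))) := by
  induction s using TensorProduct.induction_on with
  | zero => simp
  | tmul a b =>
      simp only [lTensor_tmul, LinearMap.mulRight_apply]
      rw [delta_mul δ hGal b p, C1_lemma]
  | add u v hu hv => simp only [map_add, hu, hv]

lemma P2a_lemma (hGal : IsCGalois δ) (c₁ : C) (u : P ⊗[k] C) :
    rTensor C (psi δ hGal) ((TensorProduct.assoc k C P C).symm (c₁ ⊗ₜ[k] u))
      = rTensor C (Mbar δ hGal)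
          ((TensorProduct.assoc k ((P ⊗[k] P) ⧸ galRel δ) P C).symm
            (jmap δ hGal c₁ ⊗ₜ[k] u)) := by
  induction u using TensorProduct.induction_on with
  | zero => simp
  | tmul z e =>
      simp only [TensorProduct.assoc_symm_tmul, rTensor_tmul]
      rw [psi_tmul]
  | add u v hu hv => simp only [tmul_add, map_add, hu, hv]

/-- Step (★★). -/
lemma starstar_lemma (hGal : IsCGalois δ) (p : P) (w : C ⊗[k] C) :
    Xmap δ hGal p (rTensor C (jmap δ hGal) w)
      = rTensor C (psi δ hGal)
          ((TensorProduct.assoc k C P C).symm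
            ((lTensor C (psiP δ hGal p)) w)) := by
  induction w using TensorProduct.induction_on with
  | zero => simp
  | tmul c₁ c₂ =>
      simp only [rTensor_tmul, lTensor_tmul]
      rw [Xmap_tmul, P2a_lemma, psiP_apply]
  | add u v hu hv => simp only [map_add, hu, hv]

lemma P1_lemma (hGal : IsCGalois δ) (p : P) (w : C ⊗[k] C) :
    (lTensor C (psi δ hGal)) ((TensorProduct.assoc k C C P) (w ⊗ₜ[k] p))
      = (lTensor C (psiP δ hGal p)) w := by
  induction w using TensorProduct.induction_on with
  | zero => simp
  | tmul c₁ c₂ => simp [TensorProduct.assoc_tmul, lTensor_tmul, psiP_apply]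
  | add u v hu hv => simp only [TensorProduct.add_tmul, map_add, hu, hv]

/-- Pentagon axiom. -/
lemma psi_pent (hδ : IsCoaction δ) (hGal : IsCGalois δ) :
    (lTensor P (Coalgebra.comul : C →ₗ[k] C ⊗[k] C)) ∘ₗ (psi δ hGal)
     = (TensorProduct.assoc k P C C).toLinearMap
        ∘ₗ (rTensor C (psi δ hGal))
        ∘ₗ (TensorProduct.assoc k C P C).symm.toLinearMap
        ∘ₗ (lTensor C (psi δ hGal))
        ∘ₗ (TensorProduct.assoc k C C P).toLinearMap
        ∘ₗ (rTensor P (Coalgebra.comul : C →ₗ[k] C ⊗[k] C)) := by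
  apply TensorProduct.ext'
  intro c p
  obtain ⟨t, ht, _⟩ := jmap_rep δ hGal c
  have key : (TensorProduct.assoc k P C C).symm
      ((lTensor P (Coalgebra.comul : C →ₗ[k] C ⊗[k] C)) (psi δ hGal (c ⊗ₜ[k] p)))
      = rTensor C (psi δ hGal)
          ((TensorProduct.assoc k C P C).symm
            ((lTensor C (psi δ hGal))
              ((TensorProduct.assoc k C C P)
                ((Coalgebra.comul (R := k) c) ⊗ₜ[k] p)))) := by
    rw [psi_rep δ hGal p ht, theta_canLift δ hδ, star_lemma,
      trans_comul δ hδ hGal ht, starstar_lemma, P1_lemma]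
  have := congrArg (TensorProduct.assoc k P C C) key
  rw [LinearEquiv.apply_symm_apply] at this
  simpa [LinearMap.comp_apply, rTensor_tmul] using this

end Aux5
section Aux6
set_option linter.unusedSectionVars false

variable {k : Type*} [Field k]
variable {P C : Type*} [Ring P] [Algebra k P]
  [AddCommGroup C] [Module k C] [Coalgebra k C]
variable (δ : P →ₗ[k] P ⊗[k] C)

lemma entwComp_act (ψ₀ : C ⊗[k] P →ₗ[k] P ⊗[k] C) (x : P) (u : P ⊗[k] C) (p : P) :
    ((rTensor C (LinearMap.mul' k P))
        ∘ₗ (TensorProduct.assoc k P P C).symm.toLinearMap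
        ∘ₗ (lTensor P ψ₀)
        ∘ₗ (TensorProduct.assoc k P C P).toLinearMap)
      ((act x u) ⊗ₜ[k] p)
      = act x
        (((rTensor C (LinearMap.mul' k P))
            ∘ₗ (TensorProduct.assoc k P P C).symm.toLinearMap
            ∘ₗ (lTensor P ψ₀)
            ∘ₗ (TensorProduct.assoc k P C P).toLinearMap)
          (u ⊗ₜ[k] p)) := by
  induction u using TensorProduct.induction_on with
  | zero => simp
  | tmul y c => rw [act_tmul, entwComp_tmul, entwComp_tmul, act_act]
  | add u v hu hv => simp only [map_add, TensorProduct.add_tmul, hu, hv]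

lemma entwComp_canLift {ψ' : C ⊗[k] P →ₗ[k] P ⊗[k] C} (hψ' : IsEntwinedOn δ ψ')
    (s : P ⊗[k] P) (p : P) :
    ((rTensor C (LinearMap.mul' k P))
        ∘ₗ (TensorProduct.assoc k P P C).symm.toLinearMap
        ∘ₗ (lTensor P ψ')
        ∘ₗ (TensorProduct.assoc k P C P).toLinearMap)
      ((canLift δ s) ⊗ₜ[k] p)
      = canLift δ (lTensor P (LinearMap.mulRight k p) s) := by
  induction s using TensorProduct.induction_on with
  | zero => simp
  | tmul a b =>
      rw [canLift_tmul, entwComp_act, ← hψ' b p, lTensor_tmul,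
        LinearMap.mulRight_apply, canLift_tmul]
  | add u v hu hv =>
      simp only [map_add, TensorProduct.add_tmul, hu, hv]

lemma psi_uniq (hGal : IsCGalois δ) {ψ' : C ⊗[k] P →ₗ[k] P ⊗[k] C}
    (hψ' : IsEntwinedOn δ ψ') : ψ' = psi δ hGal := by
  apply TensorProduct.ext'
  intro c p
  obtain ⟨t, ht, _⟩ := jmap_rep δ hGal c
  have h1 : ψ' (c ⊗ₜ[k] p)
      = ((rTensor C (LinearMap.mul' k P))
          ∘ₗ (TensorProduct.assoc k P P C).symm.toLinearMap
          ∘ₗ (lTensor P ψ')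
          ∘ₗ (TensorProduct.assoc k P C P).toLinearMap)
        (((1 : P) ⊗ₜ[k] c) ⊗ₜ[k] p) := by
    rw [entwComp_tmul, act_one]
  rw [h1, ← ht, entwComp_canLift δ hψ', ← psi_rep δ hGal p ht]

lemma tmul_one_mul (p : P) (t : P ⊗[k] P) :
    t * ((1 : P) ⊗ₜ[k] p) = lTensor P (LinearMap.mulRight k p) t := by
  induction t using TensorProduct.induction_on with
  | zero => simp
  | tmul a b => simp [Algebra.TensorProduct.tmul_mul_tmul, lTensor_tmul]
  | add u v hu hv => simp only [add_mul, map_add, hu, hv]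

end Aux6

theorem canonical_entwining_exists_unique
    (δ : P →ₗ[k] P ⊗[k] C) (hδ : IsCoaction δ) (hGal : IsCGalois δ) :
    ∃ ψ : C ⊗[k] P →ₗ[k] P ⊗[k] C,
      (IsEntwining ψ ∧ IsEntwinedOn δ ψ) ∧
      -- the formula ψ(c ⊗ p) = can(τ(c) · p), via any representative t of τ(c):
      (∀ (c : C) (p : P) (t : P ⊗[k] P),
          canLift δ t = (1 : P) ⊗ₜ[k] c →
          ψ (c ⊗ₜ[k] p) = canLift δ (t * ((1 : P) ⊗ₜ[k] p))) ∧
      -- uniqueness: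
      (∀ ψ' : C ⊗[k] P →ₗ[k] P ⊗[k] C,
          IsEntwining ψ' → IsEntwinedOn δ ψ' → ψ' = ψ) := by
  refine ⟨psi δ hGal,
    ⟨⟨psi_mult δ hGal, psi_unit δ hGal, psi_pent δ hδ hGal, psi_counit δ hδ hGal⟩,
      psi_entwinedOn δ hGal⟩, ?_, ?_⟩
  · intro c p t ht
    rw [psi_rep δ hGal p ht, tmul_one_mul]
  · intro ψ' _ hψ'
    exact psi_uniq δ hGal hψ'

end CGal
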